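/- For every c ≥ 1, every integer p ≥ 1, and every z in the region D = {z ∈ ℂ : |z| < 1/2, z ∉ [1/4, 1/2]}, the polynomial c(1−4z) + 4z^{p+2} does not vanish; equivalently, the rational function u_p(z) = 4z^{p+2}/(1−4z) does not take any value in the real half-line (−∞, −1] for z ∈ D. -/

import Mathlib

open Complex Finset

lemma aux_abs_im_pow (z : ℂ) (n : ℕ) :
    |(z ^ n).im| ≤ n * ‖z‖ ^ (n - 1) * |z.im| := by
  have key : z ^ n - (starRingEnd ℂ z) ^ n =
      (∑ i ∈ Finset.range n, z ^ i * (starRingEnd ℂ z) ^ (n - 1 - i)) * (z - starRingEnd ℂ z) :=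
    (geom_sum₂_mul z (starRingEnd ℂ z) n).symm
  have h1 : ∀ w : ℂ, ‖w - starRingEnd ℂ w‖ = 2 * |w.im| := by
    intro w
    rw [Complex.sub_conj, norm_mul, Complex.norm_I, mul_one, Complex.norm_real, Real.norm_eq_abs, abs_mul]
    norm_num
  have h2 : |(z ^ n).im| = ‖z ^ n - (starRingEnd ℂ z) ^ n‖ / 2 := by
    rw [← map_pow, h1]; ring
  rw [h2, key, norm_mul, h1]
  have hsum : ‖∑ i ∈ Finset.range n, z ^ i * (starRingEnd ℂ z) ^ (n - 1 - i)‖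
      ≤ n * ‖z‖ ^ (n - 1) := by
    calc ‖∑ i ∈ Finset.range n, z ^ i * (starRingEnd ℂ z) ^ (n - 1 - i)‖
        ≤ ∑ i ∈ Finset.range n, ‖z ^ i * (starRingEnd ℂ z) ^ (n - 1 - i)‖ :=
          norm_sum_le _ _
      _ = ∑ i ∈ Finset.range n, ‖z‖ ^ (n - 1) := by
          apply Finset.sum_congr rfl
          intro i hi
          have hi' := Finset.mem_range.mp hi
          rw [norm_mul, norm_pow, norm_pow, Complex.norm_conj, ← pow_add]
          congr 1
          omega
      _ = n * ‖z‖ ^ (n - 1) := by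
          rw [Finset.sum_const, Finset.card_range, nsmul_eq_mul]
  calc ‖∑ i ∈ Finset.range n, z ^ i * (starRingEnd ℂ z) ^ (n - 1 - i)‖ * (2 * |z.im|) / 2
      = ‖∑ i ∈ Finset.range n, z ^ i * (starRingEnd ℂ z) ^ (n - 1 - i)‖ * |z.im| := by
        ring
    _ ≤ n * ‖z‖ ^ (n - 1) * |z.im| := by
        exact mul_le_mul_of_nonneg_right hsum (abs_nonneg _)

theorem no_root_in_D (c : ℝ) (hc : 1 ≤ c) (p : ℕ) (hp : 1 ≤ p) (z : ℂ)
    (hz1 : ‖z‖ < 1 / 2)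
    (hz2 : ¬ (z.im = 0 ∧ 1 / 4 ≤ z.re ∧ z.re ≤ 1 / 2)) :
    (c : ℂ) * (1 - 4 * z) + 4 * z ^ (p + 2) ≠ 0 ∧
    ∀ r : ℝ, r ≤ -1 → 4 * z ^ (p + 2) / (1 - 4 * z) ≠ (r : ℂ) := by
  -- 1 - 4z ≠ 0
  have hden : (1 : ℂ) - 4 * z ≠ 0 := by
    intro h
    have hz : z = 1 / 4 := by
      linear_combination (-1 / 4 : ℂ) * h
    apply hz2
    rw [hz]
    refine ⟨by norm_num, by norm_num, by norm_num⟩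
  -- main claim: 4 z^{p+2} ≠ r (1 - 4z) for r ≤ -1
  have main : ∀ r : ℝ, r ≤ -1 → 4 * z ^ (p + 2) ≠ (r : ℂ) * (1 - 4 * z) := by
    intro r hr heq
    set n := p + 2 with hn
    -- imaginary part
    have him : (z ^ n).im = -(r * z.im) := by
      have h := congrArg Complex.im heq
      simp [Complex.add_im, Complex.mul_im, Complex.sub_im] at h
      linarith
    have hzim : z.im = 0 := by
      by_contra hy
      have hy' : 0 < |z.im| := abs_pos.mpr hy
      have hb := aux_abs_im_pow z n
      have habs : |(z ^ n).im| = |r| * |z.im| := by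
        rw [him, abs_neg, abs_mul]
      have hr1 : 1 ≤ |r| := by rw [abs_of_nonpos (by linarith)]; linarith
      -- n * |z|^{n-1} < 1
      have hcoef : (n : ℝ) * ‖z‖ ^ (n - 1) < 1 := by
        have hzp : ‖z‖ ^ (n - 1) < (1 / 2 : ℝ) ^ (n - 1) := by
          apply pow_lt_pow_left₀ hz1 (norm_nonneg z)
          omega
        have hn2 : (n : ℝ) ≤ 2 ^ (n - 1) := by
          have h := Nat.lt_two_pow_self (n := n - 1)
          have : n ≤ 2 ^ (n - 1) := by omega
          exact_mod_cast this
        calc (n : ℝ) * ‖z‖ ^ (n - 1) < (n : ℝ) * (1 / 2) ^ (n - 1) := by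
              apply mul_lt_mul_of_pos_left hzp
              positivity
          _ ≤ 2 ^ (n - 1) * (1 / 2) ^ (n - 1) := by
              apply mul_le_mul_of_nonneg_right hn2
              positivity
          _ = 1 := by
              rw [← mul_pow]; norm_num
      have : |r| * |z.im| < 1 * |z.im| := by
        calc |r| * |z.im| = |(z ^ n).im| := habs.symm
          _ ≤ (n : ℝ) * ‖z‖ ^ (n - 1) * |z.im| := hb
          _ < 1 * |z.im| := by
              exact mul_lt_mul_of_pos_right hcoef hy'
      nlinarith
    -- z is real
    set x := z.re with hx
    have hzx : z = (x : ℂ) := by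
      apply Complex.ext <;> simp [hzim, hx]
    have hxlt : x < 1 / 4 := by
      by_contra hge
      push_neg at hge
      apply hz2
      refine ⟨hzim, hge, ?_⟩
      have := Complex.abs_re_le_norm z
      have : |x| < 1 / 2 := lt_of_le_of_lt (Complex.abs_re_le_norm z) hz1
      cases abs_lt.mp this with
      | intro h1 h2 => linarith
    have hxgt : -(1 / 2) < x := by
      have : |x| < 1 / 2 := lt_of_le_of_lt (Complex.abs_re_le_norm z) hz1
      cases abs_lt.mp this with
      | intro h1 h2 => linarith
    -- real equation
    have hreq : 4 * x ^ n = r * (1 - 4 * x) := by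
      have := heq
      rw [hzx] at this
      have : ((4 * x ^ n : ℝ) : ℂ) = ((r * (1 - 4 * x) : ℝ) : ℂ) := by
        push_cast
        linear_combination this
      exact_mod_cast this
    -- contradiction: 4 x^n + (1 - 4x) > 0 but 4x^n = r(1-4x) ≤ -(1-4x)
    have hpos : 0 < 4 * x ^ n + (1 - 4 * x) := by
      rcases le_or_gt 0 x with hx0 | hx0
      · have : 0 ≤ x ^ n := pow_nonneg hx0 n
        linarith
      · have hax : |x| < 1 / 2 := lt_of_le_of_lt (Complex.abs_re_le_norm z) hz1
        have h1 : |x ^ n| ≤ |x| * (1 / 2) ^ (n - 1) := by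
          rw [_root_.abs_pow]
          have hns : n = 1 + (n - 1) := by omega
          rw [hns, pow_add, pow_one]
          refine mul_le_mul_of_nonneg_left ?_ (abs_nonneg x)
          have : 1 + (n - 1) - 1 = n - 1 := by omega
          rw [this]
          exact pow_le_pow_left₀ (abs_nonneg x) (le_of_lt hax) _
        have h2 : (1 / 2 : ℝ) ^ (n - 1) ≤ 1 / 4 := by
          calc (1 / 2 : ℝ) ^ (n - 1) ≤ (1 / 2) ^ 2 := by
                apply pow_le_pow_of_le_one (by norm_num) (by norm_num)
                omega
            _ = 1 / 4 := by norm_num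
        have h3 : |x ^ n| ≤ |x| / 4 := by nlinarith [abs_nonneg x]
        have h4 : -(|x| / 4) ≤ x ^ n := by
          have := neg_abs_le (x ^ n)
          linarith
        have h5 : |x| = -x := abs_of_neg hx0
        nlinarith
    have hrle : r * (1 - 4 * x) ≤ -(1 - 4 * x) := by
      have h14 : 0 < 1 - 4 * x := by linarith
      nlinarith
    linarith
  constructor
  · intro h
    apply main (-c) (by linarith)
    push_cast
    linear_combination h
  · intro r hr hdiv
    apply main r hr
    field_simp at hdiv
    linear_combination hdiv
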